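/- Let B, C > 0 and p ∈ (0,1), and for each Q > 0 let r*(Q) be the unique positive root of 4a·Q² = 2B·r⁶ + (1+p)C·r^(5+p) (with a > 0 fixed). Then there is no pair of constants k, α > 0 such that r*(Q) = k·Q^(1/α) for all Q > 0. -/

import Mathlib

open Set

theorem stmt_11 (p B C a : ℝ) (hp : p ∈ Ioo (0:ℝ) 1) (hB : 0 < B) (hC : 0 < C)
    (ha : 0 < a) (rstar : ℝ → ℝ)
    (hroot : ∀ Q : ℝ, 0 < Q → 0 < rstar Q ∧
      4 * a * Q ^ (2:ℝ) = 2 * B * rstar Q ^ (6:ℝ) + (1 + p) * C * rstar Q ^ (5 + p)) :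
    ¬ ∃ k α : ℝ, 0 < k ∧ 0 < α ∧ ∀ Q : ℝ, 0 < Q → rstar Q = k * Q ^ (1 / α) := by
  obtain ⟨hp0, hp1⟩ := hp
  rintro ⟨k, α, hk, hα, hpow⟩
  set c1 : ℝ := 2 * B with hc1
  set c2 : ℝ := (1 + p) * C with hc2
  have hc1p : 0 < c1 := by positivity
  have hc2p : 0 < c2 := by positivity
  set D : ℝ := 4 * a / k ^ (2 * α) with hD
  have hDp : 0 < D := by
    have := Real.rpow_pos_of_pos hk (2 * α)
    positivity
  -- key identity: ∀ x > 0, D * x ^ (2α) = c1 * x ^ 6 + c2 * x ^ (5+p)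
  have key : ∀ x : ℝ, 0 < x → D * x ^ (2 * α) = c1 * x ^ (6:ℝ) + c2 * x ^ (5 + p) := by
    intro x hx
    set Q : ℝ := (x / k) ^ α with hQdef
    have hxk : 0 < x / k := div_pos hx hk
    have hQ : 0 < Q := Real.rpow_pos_of_pos hxk α
    have hr : rstar Q = x := by
      rw [hpow Q hQ, hQdef, ← Real.rpow_mul hxk.le]
      rw [mul_one_div, div_self hα.ne', Real.rpow_one]
      field_simp
    have heq := (hroot Q hQ).2
    rw [hr] at heq
    have hQ2 : Q ^ (2:ℝ) = x ^ (2 * α) / k ^ (2 * α) := by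
      rw [hQdef, ← Real.rpow_mul hxk.le, mul_comm α 2,
        Real.div_rpow hx.le hk.le]
    rw [hQ2] at heq
    rw [hD]
    field_simp
    field_simp at heq
    linarith [heq]
  -- divide through by x^(5+p)
  set γ : ℝ := 2 * α - (5 + p) with hγ
  set q : ℝ := 1 - p with hq
  have hqpos : 0 < q := by simp [hq]; linarith
  have key2 : ∀ x : ℝ, 0 < x → D * x ^ γ = c1 * x ^ q + c2 := by
    intro x hx
    have h := key x hx
    have hx5 : (0:ℝ) < x ^ (5 + p) := Real.rpow_pos_of_pos hx _
    have e1 : x ^ (2 * α) = x ^ γ * x ^ (5 + p) := by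
      rw [← Real.rpow_add hx, hγ]; ring_nf
    have e2 : x ^ (6:ℝ) = x ^ q * x ^ (5 + p) := by
      rw [← Real.rpow_add hx]; norm_num [hq]
    rw [e1, e2] at h
    have : (D * x ^ γ) * x ^ (5+p) = (c1 * x ^ q + c2) * x ^ (5+p) := by ring_nf; ring_nf at h; linarith
    exact mul_right_cancel₀ hx5.ne' this
  by_cases hγ0 : γ = 0
  · have h1 := key2 1 one_pos
    have h2 := key2 2 two_pos
    rw [hγ0] at h1 h2
    simp [Real.one_rpow] at h1 h2
    have h2q : (1:ℝ) < (2:ℝ) ^ q := Real.one_lt_rpow_iff_of_pos two_pos |>.2 (Or.inl ⟨one_lt_two, hqpos⟩)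
    nlinarith [h1, h2, hc1p]
  · set x0 : ℝ := (c2 / (2 * D)) ^ (1 / γ) with hx0
    have hbase : 0 < c2 / (2 * D) := by positivity
    have hx0p : 0 < x0 := Real.rpow_pos_of_pos hbase _
    have hx0γ : x0 ^ γ = c2 / (2 * D) := by
      rw [hx0, ← Real.rpow_mul hbase.le, one_div, inv_mul_cancel₀ hγ0, Real.rpow_one]
    have h := key2 x0 hx0p
    rw [hx0γ] at h
    have hlhs : D * (c2 / (2 * D)) = c2 / 2 := by
      field_simp
    rw [hlhs] at h
    nlinarith [Real.rpow_pos_of_pos hx0p q, mul_pos hc1p (Real.rpow_pos_of_pos hx0p q)]
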